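/- arXiv:2205.12904 — 4 statements merged into one kernel-verified Lean document; each statement's English description precedes it below -/
import Mathlib

section
/- Let σ be a decision function, let w₁,…,w_D be i.i.d. standard Gaussian random vectors on ℝ^F, and let π be an independent standard Gaussian scalar. For the soft rule set f(x) = π·∏_{n=1}^D σ(wₙᵀx), for every t ∈ {1,…,D} and all x_i, x_j ∈ ℝ^F, E[ ⟨∇_{w_t} f(x_i), ∇_{w_t} f(x_j)⟩ ] = Σ(x_i,x_j)·T(x_i,x_j)^{D−1}·Ṫ(x_i,x_j), where ∇_{w_t} f(x) = x·σ̇(w_tᵀx)·π·∏_{n≠t} σ(wₙᵀx). -/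
open MeasureTheory ProbabilityTheory Filter

noncomputable section

/-- Euclidean inner product on `ℝ^F`. -/
def dot {F : ℕ} (u x : Fin F → ℝ) : ℝ := ∑ k, u k * x k

/-- Standard Gaussian measure on `ℝ^F` (zero mean, identity covariance). -/
def stdGauss (F : ℕ) : Measure (Fin F → ℝ) := Measure.pi fun _ => gaussianReal 0 1

/-- `T(x_i,x_j) = E[σ(uᵀx_i)·σ(uᵀx_j)]` for `u` standard Gaussian. -/
def Tker {F : ℕ} (σ : ℝ → ℝ) (xi xj : Fin F → ℝ) : ℝ :=
  ∫ u, σ (dot u xi) * σ (dot u xj) ∂ stdGauss F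

/-- `Ṫ(x_i,x_j) = E[σ̇(uᵀx_i)·σ̇(uᵀx_j)]` for `u` standard Gaussian. -/
def Tdot {F : ℕ} (σ : ℝ → ℝ) (xi xj : Fin F → ℝ) : ℝ :=
  ∫ u, deriv σ (dot u xi) * deriv σ (dot u xj) ∂ stdGauss F

/-- A decision function: differentiable with bounded derivative, values in [0,1],
and `σ(p) + σ(−p) = 1`. -/
structure IsDecisionFunc (σ : ℝ → ℝ) : Prop where
  differentiable : Differentiable ℝ σ
  deriv_bounded : ∃ C : ℝ, ∀ p : ℝ, |deriv σ p| ≤ C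
  mem_Icc : ∀ p : ℝ, σ p ∈ Set.Icc (0:ℝ) 1
  symm : ∀ p : ℝ, σ p + σ (-p) = 1

/-- The distribution of the parameters `(w₁,…,w_D, π)` of a soft rule set: the `w`'s are
i.i.d. standard Gaussian vectors on `ℝ^F` and `π` is an independent standard Gaussian. -/
def ruleParamMeasure (D F : ℕ) : Measure ((Fin D → Fin F → ℝ) × ℝ) :=
  (Measure.pi fun _ : Fin D => stdGauss F).prod (gaussianReal 0 1)

/-- The gradient of `f(x) = π·∏_{n=1}^D σ(wₙᵀx)` with respect to `w_t`:
`∇_{w_t} f(x) = x·σ̇(w_tᵀx)·π·∏_{n≠t} σ(wₙᵀx)`. -/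
def ruleGrad {D F : ℕ} (σ : ℝ → ℝ) (w : Fin D → Fin F → ℝ) (π : ℝ) (t : Fin D)
    (x : Fin F → ℝ) : Fin F → ℝ :=
  fun k => x k * deriv σ (dot (w t) x) * π * ∏ n ∈ Finset.univ.erase t, σ (dot (w n) x)

section Helpers

open Real in
lemma integrable_sq_gauss : Integrable (fun x : ℝ => x ^ 2 * Real.exp (-(x ^ 2 / 2))) := by
  have hg : Integrable (fun x : ℝ => 4 * Real.exp (-(1/4 : ℝ) * x ^ 2)) :=
    (integrable_exp_neg_mul_sq (by norm_num)).const_mul 4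
  refine hg.mono' (Continuous.aestronglyMeasurable (by continuity)) ?_
  filter_upwards with x
  have h1 : x ^ 2 / 4 ≤ Real.exp (x ^ 2 / 4) := (Real.add_one_le_exp _).trans' (by nlinarith)
  have h2 : (0:ℝ) ≤ Real.exp (-(x ^ 2 / 2)) := (Real.exp_pos _).le
  have h3 : x ^ 2 * Real.exp (-(x ^ 2 / 2)) ≤ 4 * Real.exp (x ^ 2 / 4) * Real.exp (-(x ^ 2 / 2)) := by
    nlinarith [Real.exp_pos (x^2/4)]
  rw [Real.norm_eq_abs, abs_of_nonneg (by positivity)]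
  calc x ^ 2 * Real.exp (-(x ^ 2 / 2)) ≤ 4 * Real.exp (x ^ 2 / 4) * Real.exp (-(x ^ 2 / 2)) := h3
    _ = 4 * Real.exp (-(1/4 : ℝ) * x ^ 2) := by
        rw [mul_assoc, ← Real.exp_add]; ring_nf

lemma tendsto_x_gauss : Tendsto (fun x : ℝ => x * Real.exp (-(x ^ 2 / 2))) atTop (nhds 0) := by
  have hb : Tendsto (fun x : ℝ => -(x ^ 2 / 4)) atTop atBot := by
    apply tendsto_neg_atTop_atBot.comp
    exact (tendsto_pow_atTop two_ne_zero).atTop_div_const (by norm_num)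
  have hexp : Tendsto (fun x : ℝ => Real.exp (-(x ^ 2 / 4))) atTop (nhds 0) :=
    Real.tendsto_exp_atBot.comp hb
  apply squeeze_zero' (g := fun x => Real.exp (-(x ^ 2 / 4))) ?_ ?_ hexp
  · filter_upwards [eventually_ge_atTop (0:ℝ)] with x hx
    positivity
  · filter_upwards [eventually_ge_atTop (0:ℝ)] with x hx
    have h1 : x ≤ Real.exp (x ^ 2 / 4) := by
      have := Real.add_one_le_exp (x ^ 2 / 4)
      nlinarith [sq_nonneg (x - 2)]
    calc x * Real.exp (-(x ^ 2 / 2)) ≤ Real.exp (x ^ 2 / 4) * Real.exp (-(x ^ 2 / 2)) := by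
          apply mul_le_mul_of_nonneg_right h1 (Real.exp_pos _).le
      _ = Real.exp (-(x ^ 2 / 4)) := by rw [← Real.exp_add]; ring_nf

lemma hasDerivAt_aux (x : ℝ) :
    HasDerivAt (fun x : ℝ => -(x * Real.exp (-(x ^ 2 / 2))))
      ((x ^ 2 - 1) * Real.exp (-(x ^ 2 / 2))) x := by
  have h1 : HasDerivAt (fun x : ℝ => -(x ^ 2 / 2)) (-x) x := by
    have := ((hasDerivAt_pow 2 x).div_const 2).fun_neg
    simpa using this
  have h2 := h1.exp
  have h3 := ((hasDerivAt_id x).fun_mul h2).fun_neg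
  refine h3.congr_deriv ?_
  simp only [id_eq]
  ring

lemma key_sq : ∫ x : ℝ, x ^ 2 * Real.exp (-(x ^ 2 / 2)) = Real.sqrt (2 * Real.pi) := by
  have hexp : Integrable (fun x : ℝ => Real.exp (-(x ^ 2 / 2))) := by
    have := integrable_exp_neg_mul_sq (by norm_num : (0:ℝ) < 1/2)
    convert this using 2 with x
    ring_nf
  have hint : Integrable (fun x : ℝ => (x ^ 2 - 1) * Real.exp (-(x ^ 2 / 2))) := by
    refine (integrable_sq_gauss.sub hexp).congr (Filter.Eventually.of_forall fun x => ?_)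
    simp only [Pi.sub_apply]
    ring
  have hA : ∫ x : ℝ, (x ^ 2 - 1) * Real.exp (-(x ^ 2 / 2)) = 0 - 0 :=
    integral_of_hasDerivAt_of_tendsto hasDerivAt_aux hint
      (by
        have := tendsto_x_gauss.comp tendsto_neg_atBot_atTop
        simp only [Function.comp_def] at this
        convert this using 2 with x
        ring_nf)
      (by simpa using tendsto_x_gauss.neg)
  have hE : ∫ x : ℝ, Real.exp (-(x ^ 2 / 2)) = Real.sqrt (2 * Real.pi) := by
    have := integral_gaussian (1/2 : ℝ)
    rw [show Real.pi / (1/2 : ℝ) = 2 * Real.pi by ring] at this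
    rw [← this]
    congr 1 with x
    ring_nf
  have hsub := integral_sub integrable_sq_gauss hexp
  simp only [sub_zero] at hA
  have heq : ∫ x : ℝ, (x ^ 2 - 1) * Real.exp (-(x ^ 2 / 2))
      = (∫ x : ℝ, x ^ 2 * Real.exp (-(x ^ 2 / 2))) - ∫ x : ℝ, Real.exp (-(x ^ 2 / 2)) := by
    rw [← hsub]; congr 1 with x; ring
  rw [heq] at hA
  linarith [hA, hE]

open scoped ENNReal NNReal in
lemma gauss_second_moment : ∫ x : ℝ, x ^ 2 ∂ gaussianReal 0 1 = 1 := by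
  rw [gaussianReal_of_var_ne_zero 0 one_ne_zero]
  rw [show gaussianPDF 0 1 = fun x => ((Real.toNNReal (gaussianPDFReal 0 1 x)) : ℝ≥0∞) from rfl]
  rw [integral_withDensity_eq_integral_smul ((measurable_gaussianPDFReal 0 1).real_toNNReal)]
  have hpt : ∀ x : ℝ, (Real.toNNReal (gaussianPDFReal 0 1 x)) • (x ^ 2)
      = (Real.sqrt (2 * Real.pi))⁻¹ * (x ^ 2 * Real.exp (-(x ^ 2 / 2))) := by
    intro x
    rw [NNReal.smul_def, Real.coe_toNNReal _ (gaussianPDFReal_nonneg 0 1 x)]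
    unfold gaussianPDFReal
    push_cast
    rw [mul_one, sub_zero]
    rw [smul_eq_mul]
    ring
  simp_rw [hpt]
  rw [integral_const_mul, key_sq]
  rw [inv_mul_cancel₀ (by positivity)]

end Helpers

/-- For the soft rule set `f(x) = π·∏ₙ σ(wₙᵀx)` with i.i.d. standard Gaussian parameters,
`E[⟨∇_{w_t} f(x_i), ∇_{w_t} f(x_j)⟩] = Σ(x_i,x_j)·T(x_i,x_j)^{D−1}·Ṫ(x_i,x_j)`. -/


theorem stmt4 (F D : ℕ) (σ : ℝ → ℝ) (hσ : IsDecisionFunc σ) (t : Fin D)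
    (xi xj : Fin F → ℝ) :
    ∫ p : (Fin D → Fin F → ℝ) × ℝ,
        dot (ruleGrad σ p.1 p.2 t xi) (ruleGrad σ p.1 p.2 t xj) ∂ ruleParamMeasure D F
      = dot xi xj * (Tker σ xi xj)^(D-1) * Tdot σ xi xj := by
  clear hσ
  set h : Fin D → (Fin F → ℝ) → ℝ := fun n v =>
    if n = t then deriv σ (dot v xi) * deriv σ (dot v xj)
    else σ (dot v xi) * σ (dot v xj) with hh
  have hpt : ∀ p : (Fin D → Fin F → ℝ) × ℝ,
      dot (ruleGrad σ p.1 p.2 t xi) (ruleGrad σ p.1 p.2 t xj)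
        = (dot xi xj * ∏ n, h n (p.1 n)) * (p.2 ^ 2) := by
    rintro ⟨w, c⟩
    simp only [dot, ruleGrad]
    have hprod : ∏ n, h n (w n)
        = (deriv σ (dot (w t) xi) * deriv σ (dot (w t) xj)) *
          ((∏ n ∈ Finset.univ.erase t, σ (dot (w n) xi)) *
           (∏ n ∈ Finset.univ.erase t, σ (dot (w n) xj))) := by
      rw [← Finset.mul_prod_erase Finset.univ _ (Finset.mem_univ t), hh]
      simp only [if_pos rfl]
      rw [← Finset.prod_mul_distrib]
      congr 1
      refine Finset.prod_congr rfl fun n hn => ?_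
      rw [if_neg (Finset.ne_of_mem_erase hn)]
    rw [hprod, Finset.sum_mul, Finset.sum_mul]
    exact Finset.sum_congr rfl fun k _ => by simp only [dot]; ring
  haveI hP : IsProbabilityMeasure (stdGauss F) := by
    have : IsProbabilityMeasure (Measure.pi fun _ : Fin F => gaussianReal 0 1) := inferInstance
    exact this
  haveI : IsProbabilityMeasure (Measure.pi fun _ : Fin D => stdGauss F) := inferInstance
  have hpi : (∫ w : Fin D → Fin F → ℝ, ∏ n, h n (w n) ∂ Measure.pi fun _ : Fin D => stdGauss F)
      = ∏ n, ∫ v, h n v ∂ stdGauss F := by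
    letI : MeasureSpace (Fin F → ℝ) := ⟨stdGauss F⟩
    haveI : IsProbabilityMeasure (volume : Measure (Fin F → ℝ)) := hP
    exact integral_fintype_prod_eq_prod h
  have hprodint : (∏ n, ∫ v, h n v ∂ stdGauss F)
      = Tdot σ xi xj * (Tker σ xi xj) ^ (D - 1) := by
    rw [← Finset.mul_prod_erase Finset.univ _ (Finset.mem_univ t)]
    congr 1
    · simp only [hh, if_pos rfl]; rfl
    · rw [Finset.prod_congr rfl (fun n hn => ?_), Finset.prod_const,
        Finset.card_erase_of_mem (Finset.mem_univ t), Finset.card_univ, Fintype.card_fin]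
      rw [show h n = fun v => σ (dot v xi) * σ (dot v xj) by
        funext v; simp only [hh, if_neg (Finset.ne_of_mem_erase hn)]]
      rfl
  calc ∫ p : (Fin D → Fin F → ℝ) × ℝ,
        dot (ruleGrad σ p.1 p.2 t xi) (ruleGrad σ p.1 p.2 t xj) ∂ ruleParamMeasure D F
      = ∫ p : (Fin D → Fin F → ℝ) × ℝ,
          (fun w => dot xi xj * ∏ n, h n (w n)) p.1 * (fun y => y ^ 2) p.2
          ∂ (Measure.pi fun _ : Fin D => stdGauss F).prod (gaussianReal 0 1) := by
        rw [ruleParamMeasure]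
        exact integral_congr_ae (Filter.Eventually.of_forall hpt)
    _ = (∫ w : Fin D → Fin F → ℝ, dot xi xj * ∏ n, h n (w n)
          ∂ Measure.pi fun _ : Fin D => stdGauss F) * ∫ y : ℝ, y ^ 2 ∂ gaussianReal 0 1 :=
        integral_prod_mul (μ := Measure.pi fun _ : Fin D => stdGauss F)
          (ν := gaussianReal 0 1) (fun w => dot xi xj * ∏ n, h n (w n)) (fun y => y ^ 2)
    _ = (dot xi xj * (Tdot σ xi xj * (Tker σ xi xj) ^ (D - 1))) * 1 := by
        rw [integral_const_mul, hpi, hprodint, gauss_second_moment]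
    _ = dot xi xj * (Tker σ xi xj) ^ (D - 1) * Tdot σ xi xj := by ring


end
end

section
/- Let σ be the scaled error function with scaling factor α > 0 and x_i, x_j ∈ ℝ^F (so that 0 < T(x_i,x_j) < 1/2). Then the limiting decision-list NTK converges as the depth D tends to infinity: lim_{D→∞} Θ^{(D,DL)}(x_i,x_j) = Σ(x_i,x_j)·Ṫ(x_i,x_j) / (1 − T(x_i,x_j))² + T(x_i,x_j) / (1 − T(x_i,x_j)), where Θ^{(D,DL)}(x_i,x_j) = Σ(x_i,x_j)·Ṫ(x_i,x_j)·( ∑_{d=1}^{D} d·T(x_i,x_j)^{d−1} + D·T(x_i,x_j)^{D−1} ) + ∑_{d=1}^{D} T(x_i,x_j)^d + T(x_i,x_j)^D. -/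
open MeasureTheory ProbabilityTheory Filter

noncomputable section

/-- The scaled error function with scaling factor `α`:
`σ(p) = (1/√π)·∫₀^{αp} e^{−t²} dt + 1/2`. -/
def erfScaled (α : ℝ) (p : ℝ) : ℝ :=
  (1 / Real.sqrt Real.pi) * (∫ t in (0:ℝ)..(α * p), Real.exp (-(t^2))) + 1/2

/-- The limiting decision-list NTK of depth `D`:
`Θ^{(D,DL)} = Σ·Ṫ·(∑_{d=1}^D d·T^{d−1} + D·T^{D−1}) + ∑_{d=1}^D T^d + T^D`. -/
def thetaDL {F : ℕ} (σ : ℝ → ℝ) (D : ℕ) (xi xj : Fin F → ℝ) : ℝ :=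
  dot xi xj * Tdot σ xi xj *
      ((∑ d ∈ Finset.Icc 1 D, (d : ℝ) * (Tker σ xi xj)^(d-1))
        + (D : ℝ) * (Tker σ xi xj)^(D-1))
    + (∑ d ∈ Finset.Icc 1 D, (Tker σ xi xj)^d) + (Tker σ xi xj)^D


-- Auxiliary lemmas

lemma gauss_cont : Continuous fun t : ℝ => Real.exp (-(t^2)) := by
  continuity

lemma gauss_integrable : Integrable (fun t : ℝ => Real.exp (-(t^2))) := by
  have := integrable_exp_neg_mul_sq (b := 1) one_pos
  simpa using this

lemma gauss_Ioi : ∫ t in Set.Ioi (0:ℝ), Real.exp (-(t^2)) = Real.sqrt Real.pi / 2 := by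
  have := integral_gaussian_Ioi 1
  simpa using this

lemma E_lt_half (x : ℝ) :
    (∫ t in (0:ℝ)..x, Real.exp (-(t^2))) < Real.sqrt Real.pi / 2 := by
  have hpi : 0 < Real.sqrt Real.pi := Real.sqrt_pos.2 Real.pi_pos
  rcases le_or_gt x 0 with hx | hx
  · have h0 : (∫ t in (0:ℝ)..x, Real.exp (-(t^2))) ≤ 0 := by
      rw [intervalIntegral.integral_symm]
      have : 0 ≤ ∫ t in x..(0:ℝ), Real.exp (-(t^2)) :=
        intervalIntegral.integral_nonneg hx (fun t _ => (Real.exp_pos _).le)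
      linarith
    linarith
  · have h1 : (∫ t in (0:ℝ)..x, Real.exp (-(t^2)))
        = ∫ t in Set.Ioc (0:ℝ) x, Real.exp (-(t^2)) :=
      intervalIntegral.integral_of_le hx.le
    have hunion : Set.Ioc (0:ℝ) x ∪ Set.Ioi x = Set.Ioi (0:ℝ) := Set.Ioc_union_Ioi_eq_Ioi hx.le
    have hdisj : Disjoint (Set.Ioc (0:ℝ) x) (Set.Ioi x) := Set.Ioc_disjoint_Ioi le_rfl
    have hsplit : (∫ t in Set.Ioc (0:ℝ) x, Real.exp (-(t^2)))
        + (∫ t in Set.Ioi x, Real.exp (-(t^2)))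
        = ∫ t in Set.Ioi (0:ℝ), Real.exp (-(t^2)) := by
      rw [← hunion]
      exact (setIntegral_union hdisj measurableSet_Ioi gauss_integrable.integrableOn
        gauss_integrable.integrableOn).symm
    have hpos : 0 < ∫ t in Set.Ioi x, Real.exp (-(t^2)) := by
      have hle : (∫ t in x..(x+1), Real.exp (-(t^2)))
          ≤ ∫ t in Set.Ioi x, Real.exp (-(t^2)) := by
        rw [intervalIntegral.integral_of_le (by linarith)]
        exact setIntegral_mono_set gauss_integrable.integrableOn
          (Eventually.of_forall fun t => (Real.exp_pos _).le)
          (Eventually.of_forall (Set.Ioc_subset_Ioi_self))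
      have : 0 < ∫ t in x..(x+1), Real.exp (-(t^2)) :=
        intervalIntegral.intervalIntegral_pos_of_pos
          gauss_integrable.intervalIntegrable (fun t => Real.exp_pos _) (by linarith)
      linarith
    rw [h1, ← gauss_Ioi]
    linarith

lemma E_odd (x : ℝ) :
    (∫ t in (0:ℝ)..(-x), Real.exp (-(t^2))) = -∫ t in (0:ℝ)..x, Real.exp (-(t^2)) := by
  have h := intervalIntegral.integral_comp_neg (a := (0:ℝ)) (b := x)
    (fun t => Real.exp (-(t^2)))
  simp only [neg_neg, neg_zero, even_neg] at h
  have h2 : (∫ t in (0:ℝ)..x, Real.exp (-((-t)^2))) = ∫ t in (0:ℝ)..x, Real.exp (-(t^2)) := by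
    congr 1; ext t; ring_nf
  rw [h2] at h
  rw [h]
  exact intervalIntegral.integral_symm (-x) 0



lemma E_gt (x : ℝ) :
    -(Real.sqrt Real.pi / 2) < ∫ t in (0:ℝ)..x, Real.exp (-(t^2)) := by
  have h := E_lt_half (-x)
  rw [E_odd] at h
  linarith

lemma erfScaled_mem (α p : ℝ) : erfScaled α p ∈ Set.Ioo (0:ℝ) 1 := by
  have hpi : 0 < Real.sqrt Real.pi := Real.sqrt_pos.2 Real.pi_pos
  have h1 := E_lt_half (α * p)
  have h2 := E_gt (α * p)
  unfold erfScaled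
  set E := ∫ t in (0:ℝ)..(α*p), Real.exp (-(t^2)) with hE
  have key : (1 / Real.sqrt Real.pi) * (Real.sqrt Real.pi / 2) = 1/2 := by
    field_simp
  constructor
  · have := mul_lt_mul_of_pos_left h2 (one_div_pos.2 hpi)
    rw [mul_neg, key] at this
    linarith
  · have := mul_lt_mul_of_pos_left h1 (one_div_pos.2 hpi)
    rw [key] at this
    linarith

instance (F : ℕ) : IsProbabilityMeasure (stdGauss F) := by
  unfold stdGauss; infer_instance

lemma erfScaled_continuous (α : ℝ) : Continuous (erfScaled α) := by
  unfold erfScaled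
  fun_prop

lemma dot_continuous {F : ℕ} (x : Fin F → ℝ) : Continuous fun u : Fin F → ℝ => dot u x := by
  unfold dot
  exact continuous_finset_sum _ fun k _ => (continuous_apply k).mul continuous_const

lemma Tker_integrable {F : ℕ} (α : ℝ) (xi xj : Fin F → ℝ) :
    Integrable (fun u => erfScaled α (dot u xi) * erfScaled α (dot u xj)) (stdGauss F) := by
  have hc : Continuous fun u : Fin F → ℝ =>
      erfScaled α (dot u xi) * erfScaled α (dot u xj) :=
    ((erfScaled_continuous α).comp (dot_continuous xi)).mul
      ((erfScaled_continuous α).comp (dot_continuous xj))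
  refine (integrable_const (1:ℝ)).mono' hc.aestronglyMeasurable ?_
  refine Eventually.of_forall fun u => ?_
  have h1 := erfScaled_mem α (dot u xi)
  have h2 := erfScaled_mem α (dot u xj)
  rw [Real.norm_eq_abs, abs_mul, abs_of_pos h1.1, abs_of_pos h2.1]
  nlinarith [h1.1, h1.2, h2.1, h2.2]

lemma Tker_nonneg {F : ℕ} (α : ℝ) (xi xj : Fin F → ℝ) :
    0 ≤ Tker (erfScaled α) xi xj :=
  integral_nonneg fun u =>
    mul_nonneg (erfScaled_mem α (dot u xi)).1.le (erfScaled_mem α (dot u xj)).1.le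

lemma Tker_lt_one {F : ℕ} (α : ℝ) (xi xj : Fin F → ℝ) :
    Tker (erfScaled α) xi xj < 1 := by
  have hint := Tker_integrable α xi xj
  have hf : Integrable (fun u =>
      1 - erfScaled α (dot u xi) * erfScaled α (dot u xj)) (stdGauss F) :=
    (integrable_const 1).sub hint
  have hfpos : ∀ u : Fin F → ℝ,
      0 < 1 - erfScaled α (dot u xi) * erfScaled α (dot u xj) := by
    intro u
    have h1 := erfScaled_mem α (dot u xi)
    have h2 := erfScaled_mem α (dot u xj)
    nlinarith [h1.1, h1.2, h2.1, h2.2]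
  have hpos : 0 < ∫ u, (1 - erfScaled α (dot u xi) * erfScaled α (dot u xj)) ∂ stdGauss F := by
    rw [integral_pos_iff_support_of_nonneg (fun u => (hfpos u).le) hf]
    have : Function.support (fun u : Fin F → ℝ =>
        1 - erfScaled α (dot u xi) * erfScaled α (dot u xj)) = Set.univ := by
      ext u; simp [Function.mem_support, (hfpos u).ne']
    rw [this]
    simp
  rw [integral_sub (integrable_const 1) hint, integral_const] at hpos
  simp at hpos
  unfold Tker
  linarith


lemma limits_main (T : ℝ) (h0 : 0 ≤ T) (h1 : T < 1) (a : ℝ) :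
    Tendsto (fun D : ℕ =>
      a * ((∑ d ∈ Finset.Icc 1 D, (d : ℝ) * T^(d-1)) + (D : ℝ) * T^(D-1))
        + (∑ d ∈ Finset.Icc 1 D, T^d) + T^D) atTop
      (nhds (a / (1 - T)^2 + T / (1 - T))) := by
  have hTn : ‖T‖ < 1 := by rw [Real.norm_eq_abs, abs_of_nonneg h0]; exact h1
  have hne : (1 : ℝ) - T ≠ 0 := by linarith
  have hs1 : HasSum (fun n : ℕ => (n:ℝ) * T^n) (T / (1-T)^2) :=
    hasSum_coe_mul_geometric_of_norm_lt_one hTn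
  have hs0 : HasSum (fun n : ℕ => T^n) ((1-T)⁻¹) := hasSum_geometric_of_norm_lt_one hTn
  -- sum of (n+1) T^n
  have hs2 : HasSum (fun n : ℕ => ((n:ℝ)+1) * T^n) (1 / (1-T)^2) := by
    have := hs1.add hs0
    have heq : (fun n : ℕ => (n:ℝ) * T^n + T^n) = fun n : ℕ => ((n:ℝ)+1) * T^n := by
      ext n; ring
    rw [heq] at this
    convert this using 1
    field_simp
    ring
  -- Icc sums rewritten as range sums
  have hIcc1 : ∀ D : ℕ, (∑ d ∈ Finset.Icc 1 D, (d : ℝ) * T^(d-1))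
      = ∑ i ∈ Finset.range D, ((i:ℝ)+1) * T^i := by
    intro D
    rw [← Finset.Ico_add_one_right_eq_Icc, Finset.sum_Ico_eq_sum_range]
    refine Finset.sum_congr (by norm_num) fun i _ => ?_
    have h : 1 + i - 1 = i := by omega
    rw [h]
    push_cast
    ring
  have hIcc2 : ∀ D : ℕ, (∑ d ∈ Finset.Icc 1 D, T^d)
      = T * ∑ i ∈ Finset.range D, T^i := by
    intro D
    rw [← Finset.Ico_add_one_right_eq_Icc, Finset.sum_Ico_eq_sum_range, Finset.mul_sum]
    refine Finset.sum_congr (by norm_num) fun i _ => ?_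
    have h : 1 + i = i + 1 := by omega
    rw [h, pow_succ]
    ring
  have tA : Tendsto (fun D : ℕ => ∑ d ∈ Finset.Icc 1 D, (d : ℝ) * T^(d-1)) atTop
      (nhds (1 / (1-T)^2)) := by
    simp only [hIcc1]
    exact hs2.tendsto_sum_nat
  have tB : Tendsto (fun D : ℕ => ∑ d ∈ Finset.Icc 1 D, T^d) atTop
      (nhds (T / (1 - T))) := by
    simp only [hIcc2]
    have := hs0.tendsto_sum_nat.const_mul T
    simpa [div_eq_mul_inv] using this
  have tpow : Tendsto (fun D : ℕ => T ^ D) atTop (nhds 0) :=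
    tendsto_pow_atTop_nhds_zero_of_lt_one h0 h1
  have tg : Tendsto (fun n : ℕ => (n:ℝ) * T^n + T^n) atTop (nhds 0) := by
    have h1' := hs1.summable.tendsto_atTop_zero
    simpa using h1'.add tpow
  have tC : Tendsto (fun D : ℕ => (D : ℝ) * T^(D-1)) atTop (nhds 0) := by
    have hcomp : Tendsto (fun D : ℕ => ((D-1 : ℕ):ℝ) * T^(D-1) + T^(D-1)) atTop (nhds 0) :=
      tg.comp (tendsto_sub_atTop_nat 1)
    refine hcomp.congr' ?_
    filter_upwards [eventually_ge_atTop 1] with D hD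
    have : ((D - 1 : ℕ) : ℝ) = (D : ℝ) - 1 := by
      push_cast [Nat.cast_sub hD]; ring
    rw [this]
    ring
  have := (((tA.add tC).const_mul a).add tB).add tpow
  simpa [div_eq_mul_inv] using this


/-- For the scaled error function with `α > 0`, the limiting decision-list NTK converges,
as the depth `D → ∞`, to `Σ·Ṫ/(1−T)² + T/(1−T)`. -/
theorem stmt12 (F : ℕ) (α : ℝ) (hα : 0 < α) (xi xj : Fin F → ℝ) :
    Tendsto (fun D : ℕ => thetaDL (erfScaled α) D xi xj) atTop
      (nhds (dot xi xj * Tdot (erfScaled α) xi xj / (1 - Tker (erfScaled α) xi xj)^2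
        + Tker (erfScaled α) xi xj / (1 - Tker (erfScaled α) xi xj))) := by
  simp only [thetaDL]
  exact limits_main (Tker (erfScaled α) xi xj) (Tker_nonneg α xi xj)
    (Tker_lt_one α xi xj) (dot xi xj * Tdot (erfScaled α) xi xj)

end
end

section
/- Let σ: ℝ → ℝ be measurable with 0 < σ(p) < 1 and σ(p) + σ(−p) = 1 for all p ∈ ℝ, and let u be a standard Gaussian random vector on ℝ^F. Then for all x_i, x_j ∈ ℝ^F, 0 < E[σ(uᵀx_i)·σ(uᵀx_j)] < 1/2. -/
open MeasureTheory ProbabilityTheory Filter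

noncomputable section

lemma gaussianReal_map_neg' : (gaussianReal 0 1).map (fun x : ℝ => -x) = gaussianReal 0 1 := by
  have h := gaussianReal_map_const_mul (μ := 0) (v := 1) (-1)
  have h2 : (fun x : ℝ => (-1 : ℝ) * x) = fun x : ℝ => -x := by
    funext x; ring
  rw [h2] at h
  rw [h]
  norm_num

lemma stdGauss_map_neg (F : ℕ) : (stdGauss F).map (fun u : Fin F → ℝ => -u) = stdGauss F := by
  have hneg : Measurable (fun u : Fin F → ℝ => -u) := measurable_neg
  rw [stdGauss]
  refine (Measure.pi_eq fun s hs => ?_).symm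
  rw [Measure.map_apply hneg (MeasurableSet.univ_pi hs)]
  have hpre : (fun u : Fin F → ℝ => -u) ⁻¹' Set.univ.pi s
      = Set.univ.pi (fun i => (fun x : ℝ => -x) ⁻¹' (s i)) := by
    ext u; simp [Set.mem_pi]
  rw [hpre, Measure.pi_pi]
  refine Finset.prod_congr rfl fun i _ => ?_
  conv_rhs => rw [← gaussianReal_map_neg']
  rw [Measure.map_apply measurable_neg (hs i)]

lemma dot_neg_left {F : ℕ} (u x : Fin F → ℝ) : dot (-u) x = -(dot u x) := by
  simp [dot, neg_mul, Finset.sum_neg_distrib]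

/-- If `σ` is measurable with `0 < σ(p) < 1` and `σ(p) + σ(−p) = 1` for all `p`, and `u`
is a standard Gaussian vector on `ℝ^F`, then `0 < E[σ(uᵀx_i)·σ(uᵀx_j)] < 1/2`. -/
theorem stmt13 (F : ℕ) (σ : ℝ → ℝ) (hmeas : Measurable σ)
    (hrange : ∀ p : ℝ, 0 < σ p ∧ σ p < 1) (hsymm : ∀ p : ℝ, σ p + σ (-p) = 1)
    (xi xj : Fin F → ℝ) :
    0 < ∫ u, σ (dot u xi) * σ (dot u xj) ∂ stdGauss F ∧
    ∫ u, σ (dot u xi) * σ (dot u xj) ∂ stdGauss F < 1/2 := by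
  set μ := stdGauss F with hμ
  haveI : IsProbabilityMeasure μ := by rw [hμ, stdGauss]; infer_instance
  have hdot : ∀ x : Fin F → ℝ, Measurable fun u : Fin F → ℝ => dot u x := fun x =>
    Finset.measurable_sum _ fun k _ => (measurable_pi_apply k).mul_const _
  have hneg : Measurable (fun u : Fin F → ℝ => -u) := measurable_neg
  have hsneg : ∀ p : ℝ, σ (-p) = 1 - σ p := fun p => by linarith [hsymm p]
  set g : (Fin F → ℝ) → ℝ := fun u => σ (dot u xi) * σ (dot u xj) with hg
  have hgmeas : Measurable g := (hmeas.comp (hdot xi)).mul (hmeas.comp (hdot xj))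
  have hgpos : ∀ u, 0 < g u := fun u => mul_pos (hrange _).1 (hrange _).1
  have hgle : ∀ u, g u ≤ 1 := fun u =>
    mul_le_one₀ (hrange _).2.le (hrange _).1.le (hrange _).2.le
  have hbound : ∀ {f : (Fin F → ℝ) → ℝ}, Measurable f → (∀ u, 0 ≤ f u) → (∀ u, f u ≤ 1) →
      Integrable f μ := by
    intro f hf h0 h1
    refine (integrable_const (1 : ℝ)).mono' hf.aestronglyMeasurable ?_
    filter_upwards with u
    rw [Real.norm_eq_abs, abs_of_nonneg (h0 u)]
    exact h1 u
  have hgint : Integrable g μ := hbound hgmeas (fun u => (hgpos u).le) hgle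
  -- positivity helper
  have hpos_int : ∀ {f : (Fin F → ℝ) → ℝ}, Integrable f μ → (∀ u, 0 < f u) → 0 < ∫ u, f u ∂μ := by
    intro f hfi hf
    rw [integral_pos_iff_support_of_nonneg (fun u => (hf u).le) hfi]
    have : Function.support f = Set.univ := by
      ext u; simp [Function.support, (hf u).ne']
    rw [this]
    simp
  constructor
  · exact hpos_int hgint hgpos
  -- upper bound
  · -- symmetry
    have hsym : ∫ u, g u ∂μ = ∫ u, g (-u) ∂μ := by
      conv_lhs => rw [hμ, ← stdGauss_map_neg F]
      rw [integral_map hneg.aemeasurable hgmeas.aestronglyMeasurable]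
    set k : (Fin F → ℝ) → ℝ := fun u =>
      σ (dot u xi) * (1 - σ (dot u xj)) + (1 - σ (dot u xi)) * σ (dot u xj) with hk
    have hgneg : ∀ u, g (-u) = (1 - σ (dot u xi)) * (1 - σ (dot u xj)) := by
      intro u
      simp only [hg, dot_neg_left, hsneg]
    have hkmeas : Measurable k :=
      ((hmeas.comp (hdot xi)).mul (measurable_const.sub (hmeas.comp (hdot xj)))).add
        ((measurable_const.sub (hmeas.comp (hdot xi))).mul (hmeas.comp (hdot xj)))
    have hkpos : ∀ u, 0 < k u := fun u => by
      have h1 := hrange (dot u xi); have h2 := hrange (dot u xj)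
      have : 0 < σ (dot u xi) * (1 - σ (dot u xj)) :=
        mul_pos h1.1 (by linarith [h2.2])
      have : 0 < (1 - σ (dot u xi)) * σ (dot u xj) :=
        mul_pos (by linarith [h1.2]) h2.1
      simp only [hk]; nlinarith
    have hkle : ∀ u, k u ≤ 1 := fun u => by
      have h1 := hrange (dot u xi); have h2 := hrange (dot u xj)
      simp only [hk]; nlinarith
    have hkint : Integrable k μ := hbound hkmeas (fun u => (hkpos u).le) hkle
    have hid : ∀ u, g (-u) = 1 - k u - g u := by
      intro u
      rw [hgneg u]
      simp only [hg, hk]; ring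
    have : ∫ u, g u ∂μ = 1 - ∫ u, k u ∂μ - ∫ u, g u ∂μ := by
      calc ∫ u, g u ∂μ = ∫ u, g (-u) ∂μ := hsym
        _ = ∫ u, (1 - k u - g u) ∂μ := by simp_rw [hid]
        _ = 1 - ∫ u, k u ∂μ - ∫ u, g u ∂μ := by
            have h1 : Integrable (fun u => 1 - k u) μ := by
              exact (integrable_const 1).sub hkint
            rw [integral_sub h1 hgint,
              integral_sub (integrable_const 1) hkint]
            simp
    have hkposint : 0 < ∫ u, k u ∂μ := hpos_int hkint hkpos
    linarith

end
end

section
/- Let σ be the scaled error function with scaling factor α > 0. For all x_i, x_j ∈ ℝ^F, the limiting NTK of infinite ensembles of perfect binary trees degenerates as depth grows: lim_{D→∞} Θ^{(D,PB)}(x_i,x_j) = 0, where Θ^{(D,PB)}(x_i,x_j) = 2^D·D·Σ(x_i,x_j)·T(x_i,x_j)^{D−1}·Ṫ(x_i,x_j) + (2·T(x_i,x_j))^D (this holds because 0 < T(x_i,x_j) < 1/2). -/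
open MeasureTheory ProbabilityTheory Filter

noncomputable section

-- auxiliary
namespace Aux

def G (c : ℝ) : ℝ := ∫ t in (0:ℝ)..c, Real.exp (-(t^2))

lemma expsq_integrable : MeasureTheory.Integrable (fun t : ℝ => Real.exp (-(t^2))) := by
  have := integrable_exp_neg_mul_sq (b := (1:ℝ)) one_pos
  simpa using this

lemma G_neg (c : ℝ) : G (-c) = - G c := by
  have h := intervalIntegral.integral_comp_neg (a := -c) (b := (0:ℝ))
    (f := fun t => Real.exp (-(t^2)))
  simp only [neg_sq, neg_zero, neg_neg] at h
  rw [G, G, intervalIntegral.integral_symm, h]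

lemma G_lt_of_nonneg {c : ℝ} (hc : 0 ≤ c) : G c < Real.sqrt Real.pi / 2 := by
  have hIoi : (∫ t in Set.Ioi (0:ℝ), Real.exp (-(t^2))) = Real.sqrt Real.pi / 2 := by
    have := integral_gaussian_Ioi (1:ℝ)
    simpa [neg_mul, one_mul] using this
  have hsplit : (∫ t in Set.Ioi (0:ℝ), Real.exp (-(t^2)))
      = (∫ t in Set.Ioc (0:ℝ) c, Real.exp (-(t^2)))
        + ∫ t in Set.Ioi c, Real.exp (-(t^2)) := by
    rw [← setIntegral_union]
    · rw [Set.Ioc_union_Ioi_eq_Ioi hc]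
    · exact Set.Ioc_disjoint_Ioi le_rfl
    · exact measurableSet_Ioi
    · exact expsq_integrable.integrableOn
    · exact expsq_integrable.integrableOn
  have hpos : 0 < ∫ t in Set.Ioi c, Real.exp (-(t^2)) := by
    rw [setIntegral_pos_iff_support_of_nonneg_ae]
    · have : (Function.support fun t : ℝ => Real.exp (-(t^2))) = Set.univ := by
        ext t; simp [Function.support, (Real.exp_pos _).ne']
      rw [this]
      simp [MeasureTheory.Measure.measure_Ioi_pos]
    · exact Filter.Eventually.of_forall fun t => (Real.exp_pos _).le
    · exact expsq_integrable.integrableOn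
  have hG : G c = ∫ t in Set.Ioc (0:ℝ) c, Real.exp (-(t^2)) := by
    rw [G, intervalIntegral.integral_of_le hc]
  linarith [hsplit, hpos, hG, hIoi]

lemma abs_G_lt (c : ℝ) : |G c| < Real.sqrt Real.pi / 2 := by
  rcases le_or_gt 0 c with hc | hc
  · have h1 := G_lt_of_nonneg hc
    have h0 : 0 ≤ G c := by
      rw [G]
      exact intervalIntegral.integral_nonneg hc (fun t _ => (Real.exp_pos _).le)
    rwa [abs_of_nonneg h0]
  · have h1 := G_lt_of_nonneg (neg_nonneg.mpr hc.le)
    have h0 : 0 ≤ G (-c) := by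
      rw [G]
      exact intervalIntegral.integral_nonneg (neg_nonneg.mpr hc.le)
        (fun t _ => (Real.exp_pos _).le)
    rw [G_neg] at h1 h0
    rw [abs_of_nonpos (by linarith)]
    linarith

lemma sqrtpi_pos : 0 < Real.sqrt Real.pi := Real.sqrt_pos.mpr Real.pi_pos

lemma erfScaled_mem (α p : ℝ) : erfScaled α p ∈ Set.Ioo (0:ℝ) 1 := by
  have h := abs_G_lt (α * p)
  have hs := sqrtpi_pos
  have habs : |erfScaled α p - 1/2| < 1/2 := by
    rw [erfScaled]
    have : (1 / Real.sqrt Real.pi) * G (α * p) + 1/2 - 1/2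
        = (1 / Real.sqrt Real.pi) * G (α * p) := by ring
    rw [show (1 / Real.sqrt Real.pi) * (∫ t in (0:ℝ)..(α * p), Real.exp (-(t^2))) + 1/2 - 1/2
        = (1 / Real.sqrt Real.pi) * G (α * p) by rw [G]; ring]
    rw [abs_mul, abs_of_nonneg (by positivity : (0:ℝ) ≤ 1 / Real.sqrt Real.pi)]
    calc 1 / Real.sqrt Real.pi * |G (α * p)|
        < 1 / Real.sqrt Real.pi * (Real.sqrt Real.pi / 2) := by
          apply mul_lt_mul_of_pos_left h (by positivity)
      _ = 1/2 := by field_simp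
  rw [abs_lt] at habs
  constructor <;> linarith [habs.1, habs.2]

lemma erfScaled_neg (α p : ℝ) : erfScaled α (-p) = 1 - erfScaled α p := by
  have : α * (-p) = -(α * p) := by ring
  rw [erfScaled, erfScaled, this]
  have hneg := G_neg (α * p)
  rw [G, G] at hneg
  rw [hneg]; ring

lemma erfScaled_continuous (α : ℝ) : Continuous (erfScaled α) := by
  have hG : Continuous G := by
    apply intervalIntegral.continuous_primitive
    intro a b
    exact expsq_integrable.intervalIntegrable
  have : Continuous fun p => G (α * p) := hG.comp (continuous_const.mul continuous_id)
  rw [show erfScaled α = fun p => (1 / Real.sqrt Real.pi) * G (α * p) + 1/2 by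
    funext p; rw [erfScaled, G]]
  fun_prop


instance stdGauss_prob (F : ℕ) : IsProbabilityMeasure (stdGauss F) := by
  unfold stdGauss; infer_instance

lemma gauss_map_neg : (gaussianReal 0 1).map (fun x : ℝ => -x) = gaussianReal 0 1 := by
  have h := gaussianReal_map_const_mul (μ := 0) (v := 1) (-1)
  have h1 : (fun x : ℝ => (-1) * x) = fun x : ℝ => -x := by funext x; ring
  have h2 : (⟨(-1:ℝ)^2, sq_nonneg _⟩ : NNReal) * 1 = 1 := by
    ext; norm_num
  rw [h1] at h
  rw [h]; congr 1
  · norm_num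

lemma stdGauss_map_neg (F : ℕ) :
    (stdGauss F).map (fun u : Fin F → ℝ => -u) = stdGauss F := by
  rw [stdGauss]
  refine (Measure.pi_eq fun s hs => ?_).symm
  rw [Measure.map_apply measurable_neg (MeasurableSet.univ_pi hs)]
  have hpre : (fun u : Fin F → ℝ => -u) ⁻¹' Set.pi Set.univ s
      = Set.pi Set.univ (fun i => (fun x : ℝ => -x) ⁻¹' s i) := by
    ext u; simp [Set.mem_pi]
  rw [hpre, Measure.pi_pi]
  refine Finset.prod_congr rfl fun i _ => ?_
  rw [← Measure.map_apply measurable_neg (hs i), gauss_map_neg]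

lemma integral_comp_neg_stdGauss {F : ℕ} (f : (Fin F → ℝ) → ℝ)
    (hf : AEStronglyMeasurable f (stdGauss F)) :
    ∫ u, f (-u) ∂ stdGauss F = ∫ u, f u ∂ stdGauss F := by
  have h := integral_map (μ := stdGauss F) (φ := fun u : Fin F → ℝ => -u)
    measurable_neg.aemeasurable (f := f) (by rw [stdGauss_map_neg]; exact hf)
  rw [stdGauss_map_neg] at h
  exact h.symm

lemma dot_neg {F : ℕ} (u x : Fin F → ℝ) : dot (-u) x = - dot u x := by
  simp [dot, Finset.sum_neg_distrib, neg_mul]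

lemma dot_continuous {F : ℕ} (x : Fin F → ℝ) : Continuous fun u : Fin F → ℝ => dot u x := by
  unfold dot; fun_prop

lemma integrable_bdd {F : ℕ} {f : (Fin F → ℝ) → ℝ} (hc : Continuous f) (C : ℝ)
    (hb : ∀ u, |f u| ≤ C) : Integrable f (stdGauss F) :=
  ⟨hc.aestronglyMeasurable,
    HasFiniteIntegral.of_bounded (C := C) (Filter.Eventually.of_forall fun u => by
      simpa [Real.norm_eq_abs] using hb u)⟩

lemma Tker_bounds {F : ℕ} (α : ℝ) (xi xj : Fin F → ℝ) :
    0 < Tker (erfScaled α) xi xj ∧ 2 * Tker (erfScaled α) xi xj < 1 := by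
  set σ := erfScaled α with hσdef
  have hσc : Continuous σ := erfScaled_continuous α
  have hσm : ∀ p, σ p ∈ Set.Ioo (0:ℝ) 1 := erfScaled_mem α
  set f : (Fin F → ℝ) → ℝ := fun u => σ (dot u xi) * σ (dot u xj) with hfdef
  have hfc : Continuous f := (hσc.comp (dot_continuous xi)).mul (hσc.comp (dot_continuous xj))
  have hfval : ∀ u, f u = σ (dot u xi) * σ (dot u xj) := fun u => rfl
  have hfb : ∀ u, |f u| ≤ 1 := by
    intro u
    obtain ⟨h1a, h1b⟩ := hσm (dot u xi); obtain ⟨h2a, h2b⟩ := hσm (dot u xj)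
    rw [hfval u, abs_of_nonneg (by nlinarith)]
    nlinarith
  have hfi : Integrable f (stdGauss F) := integrable_bdd hfc 1 hfb
  have hT : Tker σ xi xj = ∫ u, f u ∂ stdGauss F := rfl
  have hTpos : 0 < Tker σ xi xj := by
    rw [hT, integral_pos_iff_support_of_nonneg_ae]
    · have : (Function.support f) = Set.univ := by
        ext u
        have h1 := hσm (dot u xi); have h2 := hσm (dot u xj)
        simp only [Function.mem_support, Set.mem_univ, iff_true, hfval u]
        nlinarith [h1.1, h2.1]
      rw [this]
      simp [(stdGauss_prob F).measure_univ]
    · exact Filter.Eventually.of_forall fun u => by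
        have h1 := hσm (dot u xi); have h2 := hσm (dot u xj)
        simp only [Pi.zero_apply, hfval u]
        nlinarith [h1.1, h2.1]
    · exact hfi
  refine ⟨hTpos, ?_⟩
  -- symmetry step
  set g : (Fin F → ℝ) → ℝ :=
    fun u => σ (dot u xi) * (1 - σ (dot u xj)) + σ (dot u xj) * (1 - σ (dot u xi)) with hgdef
  have hgc : Continuous g := by
    apply Continuous.add
    · exact (hσc.comp (dot_continuous xi)).mul
        (continuous_const.sub (hσc.comp (dot_continuous xj)))
    · exact (hσc.comp (dot_continuous xj)).mul
        (continuous_const.sub (hσc.comp (dot_continuous xi)))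
  have hgval : ∀ u, g u
      = σ (dot u xi) * (1 - σ (dot u xj)) + σ (dot u xj) * (1 - σ (dot u xi)) := fun u => rfl
  have hgb : ∀ u, |g u| ≤ 2 := by
    intro u
    obtain ⟨h1a, h1b⟩ := hσm (dot u xi); obtain ⟨h2a, h2b⟩ := hσm (dot u xj)
    rw [hgval u, abs_of_nonneg (by nlinarith)]
    nlinarith
  have hgi : Integrable g (stdGauss F) := integrable_bdd hgc 2 hgb
  have hneg : ∫ u, f (-u) ∂ stdGauss F = Tker σ xi xj := by
    rw [hT]; exact integral_comp_neg_stdGauss f hfc.aestronglyMeasurable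
  have hfneg : ∀ u, f (-u) = (1 - σ (dot u xi)) * (1 - σ (dot u xj)) := by
    intro u
    simp only [hfdef, dot_neg, hσdef, erfScaled_neg]
  have hsum : (fun u => f u + f (-u)) = fun u => 1 - g u := by
    funext u; rw [hfneg u]; simp only [hfdef, hgdef]; ring
  have hint2 : ∫ u, (f u + f (-u)) ∂ stdGauss F = 2 * Tker σ xi xj := by
    rw [integral_add hfi]
    · rw [hneg, hT]; ring
    · exact integrable_bdd (hfc.comp continuous_neg) 1 (fun u => hfb (-u))
  have hint3 : ∫ u, (1 - g u) ∂ stdGauss F = 1 - ∫ u, g u ∂ stdGauss F := by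
    rw [integral_sub (integrable_const 1) hgi]
    simp [(stdGauss_prob F).measure_univ]
  have hgpos : 0 < ∫ u, g u ∂ stdGauss F := by
    rw [integral_pos_iff_support_of_nonneg_ae]
    · have : (Function.support g) = Set.univ := by
        ext u
        have h1 := hσm (dot u xi); have h2 := hσm (dot u xj)
        simp only [Function.mem_support, Set.mem_univ, iff_true, hgval u]
        nlinarith [h1.1, h1.2, h2.1, h2.2]
      rw [this]
      simp [(stdGauss_prob F).measure_univ]
    · exact Filter.Eventually.of_forall fun u => by
        have h1 := hσm (dot u xi); have h2 := hσm (dot u xj)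
        simp only [Pi.zero_apply, hgval u]
        nlinarith [h1.1, h1.2, h2.1, h2.2]
    · exact hgi
  have : 2 * Tker σ xi xj = 1 - ∫ u, g u ∂ stdGauss F := by
    rw [← hint2, hsum, hint3]
  linarith

end Aux

/-- For the scaled error function with `α > 0`, the limiting perfect-binary-tree NTK
`Θ^{(D,PB)} = 2^D·D·Σ·T^{D−1}·Ṫ + (2·T)^D` degenerates as the depth grows:
`lim_{D→∞} Θ^{(D,PB)}(x_i,x_j) = 0`. -/
theorem stmt17 (F : ℕ) (α : ℝ) (hα : 0 < α) (xi xj : Fin F → ℝ) :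
    Filter.Tendsto
      (fun D : ℕ =>
        (2:ℝ)^D * (D : ℝ) * dot xi xj * (Tker (erfScaled α) xi xj)^(D-1) *
            Tdot (erfScaled α) xi xj
          + (2 * Tker (erfScaled α) xi xj)^D)
      Filter.atTop (nhds 0) := by
  obtain ⟨hTpos, hTlt⟩ := Aux.Tker_bounds (F := F) α xi xj
  set t := Tker (erfScaled α) xi xj with ht
  set r := 2 * t with hr
  have hr0 : 0 < r := by rw [hr]; linarith
  have hr1 : r < 1 := by rw [hr]; exact hTlt
  have hrne : r ≠ 0 := ne_of_gt hr0
  have hnr : Tendsto (fun n : ℕ => (n:ℝ) * r^n) atTop (nhds 0) := by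
    have hs := summable_norm_pow_mul_geometric_of_norm_lt_one (R := ℝ) 1
      (r := r) (by rw [Real.norm_eq_abs, abs_of_pos hr0]; exact hr1)
    have hs2 : Summable (fun n : ℕ => (n:ℝ)^1 * r^n) := hs.of_norm
    simp only [pow_one] at hs2
    exact hs2.tendsto_atTop_zero
  have hpow : Tendsto (fun n : ℕ => r^n) atTop (nhds 0) :=
    tendsto_pow_atTop_nhds_zero_of_lt_one hr0.le hr1
  have hmain : Tendsto
      (fun D : ℕ => (2 * dot xi xj * Tdot (erfScaled α) xi xj / r) * ((D:ℝ) * r^D) + r^D)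
      atTop (nhds 0) := by
    have := (hnr.const_mul (2 * dot xi xj * Tdot (erfScaled α) xi xj / r)).add hpow
    simpa using this
  refine Filter.Tendsto.congr' ?_ hmain
  filter_upwards [eventually_ge_atTop 1] with D hD
  obtain ⟨E, rfl⟩ := Nat.exists_eq_add_of_le hD
  have hsub : 1 + E - 1 = E := by omega
  rw [hsub]
  have hrpow : r ^ (1 + E) = r * r ^ E := by rw [pow_add, pow_one]
  have h2pow : (2:ℝ) ^ (1 + E) = 2 * 2 ^ E := by rw [pow_add, pow_one]
  have hre : r ^ E = 2 ^ E * t ^ E := by rw [hr, mul_pow]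
  rw [hrpow, h2pow, hre]
  field_simp

end
end
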